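/- (Theorem 2 of the paper, asymptotic tracking error.) Under the hypotheses of the finite-time tracking bound — Y = ∏_{i=1}^d [l_i, u_i] a nonempty box; (F^k)_{k≥0} differentiable with coordinate-wise quadratic upper bound constant L > 0 on Y; each F^k prox-PL on Y with constant σ ∈ (0, dL) and common attained optimal value F*; sup_{ξ∈Y} |F^k(ξ) − F^{k−1}(ξ)| ≤ e; iterates ξ^{j+1}(ω) given by one coordinate prox-step of F^j per time step along coordinate sequence ω — the expected tracking error satisfies limsup_{k→∞} d^{−k} Σ_{ω ∈ {1,…,d}^k} [ F^k(ξ^k(ω)) − F* ] ≤ e · dL/σ, i.e. limsup of the expected suboptimality is at most e/(1 − q) with q := 1 − σ/(dL). -/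

import Mathlib

/-- Membership in the box `Y = ∏_i [l_i, u_i] ⊂ ℝ^d`. -/
def InBox {d : ℕ} (l u ξ : Fin d → ℝ) : Prop := ∀ i, ξ i ∈ Set.Icc (l i) (u i)

/-- The `i`-th partial derivative `∂_i F` of `F : ℝ^d → ℝ` at `ξ`. -/
noncomputable def pd {d : ℕ} (F : (Fin d → ℝ) → ℝ) (ξ : Fin d → ℝ) (i : Fin d) : ℝ :=
  deriv (fun t : ℝ => F (Function.update ξ i t)) (ξ i)

/-- `F` has a coordinate-wise quadratic upper bound with constant `L` on the box:
`F(ξ + α e_i) ≤ F(ξ) + α ∂_i F(ξ) + (L/2) α²` whenever `ξ` and `ξ + α e_i` lie in the box. -/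
def CoordQuadUB {d : ℕ} (F : (Fin d → ℝ) → ℝ) (L : ℝ) (l u : Fin d → ℝ) : Prop :=
  ∀ ξ, InBox l u ξ → ∀ i : Fin d, ∀ α : ℝ, InBox l u (Function.update ξ i (ξ i + α)) →
    F (Function.update ξ i (ξ i + α)) ≤ F ξ + α * pd F ξ i + L / 2 * α ^ 2

/-- `ξ'` is the coordinate prox-step of `F` at `ξ` in coordinate `i` with step constant `L`:
`ξ' = ξ + α e_i` where `α` minimizes `α ∂_i F(ξ) + (L/2) α²` subject to `ξ_i + α ∈ [l_i, u_i]`. -/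
def IsProxStep {d : ℕ} (F : (Fin d → ℝ) → ℝ) (L : ℝ) (l u ξ : Fin d → ℝ) (i : Fin d)
    (ξ' : Fin d → ℝ) : Prop :=
  ∃ α : ℝ, ξ' = Function.update ξ i (ξ i + α) ∧ ξ i + α ∈ Set.Icc (l i) (u i) ∧
    ∀ β : ℝ, ξ i + β ∈ Set.Icc (l i) (u i) →
      α * pd F ξ i + L / 2 * α ^ 2 ≤ β * pd F ξ i + L / 2 * β ^ 2

/-- The forward-step quantity
`D(ξ, α) = −2α · inf_{ξ' ∈ Y} [⟨∇F(ξ), ξ' − ξ⟩ + (α/2)‖ξ' − ξ‖²]`. -/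
noncomputable def Dfwd {d : ℕ} (F : (Fin d → ℝ) → ℝ) (l u ξ : Fin d → ℝ) (α : ℝ) : ℝ :=
  -2 * α * sInf {v : ℝ | ∃ ξ', InBox l u ξ' ∧
    v = (∑ i, pd F ξ i * (ξ' i - ξ i)) + α / 2 * ∑ i, (ξ' i - ξ i) ^ 2}

/-- The proximal Polyak–Łojasiewicz inequality on the box with constant `σ` and optimal
value `Fstar`: `(1/2) D(ξ, L) ≥ σ (F(ξ) − F*)` for all `ξ` in the box. -/
def ProxPL {d : ℕ} (F : (Fin d → ℝ) → ℝ) (L : ℝ) (l u : Fin d → ℝ) (σ Fstar : ℝ) : Prop :=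
  ∀ ξ, InBox l u ξ → (1 / 2) * Dfwd F l u ξ L ≥ σ * (F ξ - Fstar)

lemma inBox_proxStep {d : ℕ} {F : (Fin d → ℝ) → ℝ} {L : ℝ} {l u ξ : Fin d → ℝ} {i : Fin d}
    {ξ' : Fin d → ℝ} (hξ : InBox l u ξ) (h : IsProxStep F L l u ξ i ξ') : InBox l u ξ' := by
  obtain ⟨α, rfl, hmem, -⟩ := h
  intro j
  rcases eq_or_ne j i with rfl | hj
  · simpa using hmem
  · simpa [Function.update_of_ne hj] using hξ j

lemma descent_sum {d : ℕ} {l u : Fin d → ℝ} {F : (Fin d → ℝ) → ℝ} {L σ Fstar : ℝ}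
    (hL : 0 < L) (hquad : CoordQuadUB F L l u) (hPL : ProxPL F L l u σ Fstar)
    {ξ : Fin d → ℝ} (hξ : InBox l u ξ) {ξ' : Fin d → (Fin d → ℝ)}
    (hstep : ∀ i, IsProxStep F L l u ξ i (ξ' i)) :
    ∑ i, F (ξ' i) ≤ d * F ξ - σ / L * (F ξ - Fstar) := by
  choose α hval hmem hmin using hstep
  set m : Fin d → ℝ := fun i => α i * pd F ξ i + L / 2 * (α i) ^ 2 with hm
  have hub : ∀ i, F (ξ' i) ≤ F ξ + m i := by
    intro i
    have hbox : InBox l u (Function.update ξ i (ξ i + α i)) := by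
      rw [← hval i]; exact inBox_proxStep hξ ⟨α i, hval i, hmem i, hmin i⟩
    have h := hquad ξ hξ i (α i) hbox
    rw [hval i]
    simp only [hm]
    linarith
  set S : Set ℝ := {v : ℝ | ∃ ξ'', InBox l u ξ'' ∧
    v = (∑ i, pd F ξ i * (ξ'' i - ξ i)) + L / 2 * ∑ i, (ξ'' i - ξ i) ^ 2} with hS
  have hSne : S.Nonempty := ⟨_, ξ, hξ, rfl⟩
  have hlb : ∑ i, m i ≤ sInf S := by
    apply le_csInf hSne
    rintro b ⟨ξ'', hξ'', rfl⟩
    rw [Finset.mul_sum, ← Finset.sum_add_distrib]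
    refine Finset.sum_le_sum fun i _ => ?_
    have hβ : ξ i + (ξ'' i - ξ i) ∈ Set.Icc (l i) (u i) := by
      simpa using hξ'' i
    have h := hmin i _ hβ
    simp only [hm]
    linarith
  have hPLξ := hPL ξ hξ
  have hD : Dfwd F l u ξ L = -2 * L * sInf S := rfl
  rw [hD] at hPLξ
  have hsum : L * (∑ i, m i) ≤ -(σ * (F ξ - Fstar)) := by
    have := mul_le_mul_of_nonneg_left hlb hL.le
    linarith
  have h2 : ∑ i, m i ≤ -(σ / L * (F ξ - Fstar)) := by
    rw [← mul_le_mul_iff_of_pos_left hL]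
    calc L * ∑ i, m i ≤ -(σ * (F ξ - Fstar)) := hsum
      _ = L * -(σ / L * (F ξ - Fstar)) := by field_simp
  calc ∑ i, F (ξ' i) ≤ ∑ i, (F ξ + m i) := Finset.sum_le_sum fun i _ => hub i
    _ = d * F ξ + ∑ i, m i := by
        rw [Finset.sum_add_distrib, Finset.sum_const, Finset.card_univ, Fintype.card_fin,
          nsmul_eq_mul]
    _ ≤ d * F ξ - σ / L * (F ξ - Fstar) := by linarith

/-- Theorem 2 of the paper, asymptotic tracking error: under the hypotheses
of the finite-time tracking bound, the expected tracking error satisfies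
`limsup_{k→∞} d^{−k} Σ_ω [F^k(ξ^k(ω)) − F*] ≤ e · dL/σ = e/(1 − q)`. -/
theorem stmt9 {d : ℕ} (hd : 0 < d) (l u : Fin d → ℝ) (hlu : ∀ i, l i ≤ u i)
    (Fk : ℕ → (Fin d → ℝ) → ℝ) (hdiff : ∀ k, Differentiable ℝ (Fk k))
    (L σ Fstar e : ℝ) (hL : 0 < L) (hσ : 0 < σ) (hσ' : σ < d * L) (he : 0 ≤ e)
    (hquad : ∀ k, CoordQuadUB (Fk k) L l u)
    (hstar : ∀ k, Fstar = sInf {v : ℝ | ∃ ξ, InBox l u ξ ∧ v = Fk k ξ})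
    (hatt : ∀ k, ∃ ξs, InBox l u ξs ∧ Fk k ξs = Fstar)
    (hPL : ∀ k, ProxPL (Fk k) L l u σ Fstar)
    (hvar : ∀ k : ℕ, 1 ≤ k → ∀ ξ, InBox l u ξ → |Fk k ξ - Fk (k - 1) ξ| ≤ e)
    (ξ0 : Fin d → ℝ) (hξ0 : InBox l u ξ0)
    (Ξ : (k : ℕ) → (Fin k → Fin d) → (Fin d → ℝ))
    (hinit : ∀ ω : Fin 0 → Fin d, Ξ 0 ω = ξ0)
    (hstep : ∀ k : ℕ, ∀ ω : Fin (k + 1) → Fin d,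
      IsProxStep (Fk k) L l u (Ξ k (fun j => ω j.castSucc)) (ω (Fin.last k)) (Ξ (k + 1) ω)) :
    Filter.limsup
        (fun k : ℕ => (1 / (d : ℝ) ^ k) * ∑ ω : Fin k → Fin d, (Fk k (Ξ k ω) - Fstar))
        Filter.atTop ≤ e * (d * L) / σ := by
  
  have hd0 : (0:ℝ) < (d:ℝ) := by exact_mod_cast hd
  have hdL : (0:ℝ) < (d:ℝ) * L := mul_pos hd0 hL
  set q : ℝ := 1 - σ / ((d:ℝ) * L) with hqdef
  set C : ℝ := e * ((d:ℝ) * L) / σ with hCdef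
  have hq0 : 0 < q := by
    have : σ / ((d:ℝ) * L) < 1 := (div_lt_one hdL).mpr hσ'
    simp only [hqdef]; linarith
  have hq1 : q < 1 := by
    have : 0 < σ / ((d:ℝ) * L) := div_pos hσ hdL
    simp only [hqdef]; linarith
  set g : ℕ → ℝ :=
    fun k : ℕ => (1 / (d : ℝ) ^ k) * ∑ ω : Fin k → Fin d, (Fk k (Ξ k ω) - Fstar) with hgdef
  -- iterates stay in the box
  have hbox : ∀ k (ω : Fin k → Fin d), InBox l u (Ξ k ω) := by
    intro k
    induction k with
    | zero => intro ω; rw [hinit ω]; exact hξ0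
    | succ k ih => intro ω; exact inBox_proxStep (ih _) (hstep k ω)
  -- optimality of Fstar
  have hopt : ∀ k (ξ : Fin d → ℝ), InBox l u ξ → Fstar ≤ Fk k ξ := by
    intro k ξ hξ
    have hcomp : IsCompact {ξ : Fin d → ℝ | InBox l u ξ} := by
      have heq : {ξ : Fin d → ℝ | InBox l u ξ}
          = Set.univ.pi (fun i => Set.Icc (l i) (u i)) := by
        ext ξ
        simp only [InBox, Set.mem_setOf_eq, Set.mem_pi, Set.mem_univ, forall_true_left]
      rw [heq]; exact isCompact_univ_pi fun i => isCompact_Icc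
    have himg : {v : ℝ | ∃ ξ, InBox l u ξ ∧ v = Fk k ξ} = Fk k '' {ξ | InBox l u ξ} := by
      ext v; constructor
      · rintro ⟨ξ, h1, rfl⟩; exact ⟨ξ, h1, rfl⟩
      · rintro ⟨ξ, h1, rfl⟩; exact ⟨ξ, h1, rfl⟩
    have hbdd : BddBelow {v : ℝ | ∃ ξ, InBox l u ξ ∧ v = Fk k ξ} := by
      rw [himg]; exact (hcomp.image (hdiff k).continuous).bddBelow
    rw [hstar k]
    exact csInf_le hbdd ⟨ξ, hξ, rfl⟩
  have hge : ∀ k, 0 ≤ g k := by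
    intro k
    apply mul_nonneg (by positivity)
    exact Finset.sum_nonneg fun ω _ => sub_nonneg.mpr (hopt k _ (hbox k ω))
  -- one-step recursion
  have hrec : ∀ k, g (k + 1) ≤ q * g k + e := by
    intro k
    have key : ∀ ω' : Fin k → Fin d,
        ∑ i : Fin d, (Fk (k+1) (Ξ (k+1) (Fin.snoc ω' i)) - Fstar)
          ≤ ((d:ℝ) - σ / L) * (Fk k (Ξ k ω') - Fstar) + (d:ℝ) * e := by
      intro ω'
      have hstepi : ∀ i : Fin d,
          IsProxStep (Fk k) L l u (Ξ k ω') i (Ξ (k+1) (Fin.snoc ω' i)) := by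
        intro i
        have h := hstep k (Fin.snoc ω' i)
        have h1 : (fun j : Fin k => (Fin.snoc ω' i : Fin (k+1) → Fin d) j.castSucc) = ω' := by
          funext j; simp
        rw [h1, Fin.snoc_last] at h
        exact h
      have hdesc := descent_sum hL (hquad k) (hPL k) (hbox k ω') hstepi
      have hvar' : ∀ i : Fin d,
          Fk (k+1) (Ξ (k+1) (Fin.snoc ω' i)) ≤ Fk k (Ξ (k+1) (Fin.snoc ω' i)) + e := by
        intro i
        have hb := hbox (k+1) (Fin.snoc ω' i)
        have h := hvar (k+1) (by omega) _ hb
        simp only [Nat.add_sub_cancel] at h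
        have h2 := abs_le.mp h
        linarith [h2.2]
      calc ∑ i : Fin d, (Fk (k+1) (Ξ (k+1) (Fin.snoc ω' i)) - Fstar)
          ≤ ∑ i : Fin d, (Fk k (Ξ (k+1) (Fin.snoc ω' i)) - Fstar + e) :=
            Finset.sum_le_sum fun i _ => by linarith [hvar' i]
        _ = (∑ i : Fin d, Fk k (Ξ (k+1) (Fin.snoc ω' i))) - (d:ℝ) * Fstar + (d:ℝ) * e := by
            rw [Finset.sum_add_distrib, Finset.sum_sub_distrib, Finset.sum_const,
              Finset.sum_const, Finset.card_univ, Fintype.card_fin, nsmul_eq_mul,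
              nsmul_eq_mul]
        _ ≤ ((d:ℝ) - σ / L) * (Fk k (Ξ k ω') - Fstar) + (d:ℝ) * e := by nlinarith [hdesc]
    have h1 : ∑ ω : Fin (k+1) → Fin d, (Fk (k+1) (Ξ (k+1) ω) - Fstar)
        ≤ ((d:ℝ) - σ / L) * (∑ ω' : Fin k → Fin d, (Fk k (Ξ k ω') - Fstar))
          + (d:ℝ)^(k+1) * e := by
      have hsum : (∑ ω : Fin (k+1) → Fin d, (Fk (k+1) (Ξ (k+1) ω) - Fstar))
          = ∑ p : Fin d × (Fin k → Fin d),
              (Fk (k+1) (Ξ (k+1) (Fin.snoc p.2 p.1)) - Fstar) :=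
        (Fintype.sum_equiv (Fin.snocEquiv fun _ => Fin d) _ _ fun p => rfl).symm
      rw [hsum, Fintype.sum_prod_type, Finset.sum_comm]
      calc ∑ ω' : Fin k → Fin d, ∑ i : Fin d, (Fk (k+1) (Ξ (k+1) (Fin.snoc ω' i)) - Fstar)
          ≤ ∑ ω' : Fin k → Fin d,
              (((d:ℝ) - σ / L) * (Fk k (Ξ k ω') - Fstar) + (d:ℝ) * e) :=
            Finset.sum_le_sum fun ω' _ => key ω'
        _ = ((d:ℝ) - σ / L) * (∑ ω' : Fin k → Fin d, (Fk k (Ξ k ω') - Fstar))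
              + (d:ℝ)^(k+1) * e := by
            rw [Finset.sum_add_distrib, ← Finset.mul_sum, Finset.sum_const,
              Finset.card_univ, Fintype.card_fun, Fintype.card_fin, Fintype.card_fin,
              nsmul_eq_mul]
            push_cast
            ring
    have hLne : L ≠ 0 := hL.ne'
    have hdne : (d:ℝ) ≠ 0 := hd0.ne'
    have hpow : (0:ℝ) < 1 / (d:ℝ)^(k+1) := by positivity
    have h2 := mul_le_mul_of_nonneg_left h1 hpow.le
    simp only [hgdef]
    calc (1 / (d:ℝ)^(k+1)) * ∑ ω : Fin (k+1) → Fin d, (Fk (k+1) (Ξ (k+1) ω) - Fstar)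
        ≤ (1 / (d:ℝ)^(k+1)) * (((d:ℝ) - σ / L)
            * (∑ ω' : Fin k → Fin d, (Fk k (Ξ k ω') - Fstar)) + (d:ℝ)^(k+1) * e) := h2
      _ = q * ((1 / (d:ℝ)^k) * ∑ ω' : Fin k → Fin d, (Fk k (Ξ k ω') - Fstar)) + e := by
          simp only [hqdef]
          field_simp
          ring
  -- geometric bound
  have hqC : q * C + e = C := by
    simp only [hqdef, hCdef]
    field_simp
    ring
  set M : ℝ := max (g 0 - C) 0 with hMdef
  have hM : 0 ≤ M := le_max_right _ _
  have hbound : ∀ k, g k ≤ C + q ^ k * M := by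
    intro k
    induction k with
    | zero =>
      have : g 0 - C ≤ M := le_max_left _ _
      simp only [pow_zero, one_mul]
      linarith
    | succ k ih =>
      have h1 := hrec k
      have h2 : q * g k ≤ q * (C + q ^ k * M) := mul_le_mul_of_nonneg_left ih hq0.le
      calc g (k+1) ≤ q * g k + e := h1
        _ ≤ q * (C + q ^ k * M) + e := by linarith
        _ = (q * C + e) + q ^ (k+1) * M := by ring
        _ = C + q ^ (k+1) * M := by rw [hqC]
  -- conclude via limsup
  have htend : Filter.Tendsto (fun k : ℕ => C + q ^ k * M) Filter.atTop (nhds C) := by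
    have h0 : Filter.Tendsto (fun k : ℕ => q ^ k) Filter.atTop (nhds 0) :=
      tendsto_pow_atTop_nhds_zero_of_lt_one hq0.le hq1
    have h1 := (h0.mul_const M).const_add C
    simpa using h1
  have hle : Filter.limsup g Filter.atTop
      ≤ Filter.limsup (fun k : ℕ => C + q ^ k * M) Filter.atTop := by
    exact Filter.limsup_le_limsup (Filter.Eventually.of_forall hbound)
      (Filter.isCoboundedUnder_le_of_le Filter.atTop hge) htend.isBoundedUnder_le
  rw [htend.limsup_eq] at hle
  exact hle
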